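/- Let M ≅ ℤ^n be a lattice, λ : M → ℤ a group homomorphism, and consider the filtration of R = ℤ[M] by submodules R_{≥w} spanned by monomials q^β with λ(β) ≥ w. If f = ∏_{β∈S}(1 − q^β) with λ(β) ≠ 0 for every β in the finite set S, and v is the minimal λ-weight of a monomial appearing in f, then the leading term of f in the associated graded gr_v R is ±q^γ for a single character γ with λ(γ) = v; in particular multiplication by f induces an isomorphism gr_w R → gr_{w+v} R for every w. -/

import Mathlib

open Finsupp

/-- Membership in the filtration step `R_{≥w}` of `R = ℤ[M]`: all monomials of `x` have
`λ`-weight at least `w`. -/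
def inFil (n : ℕ) (lam : (Fin n → ℤ) →+ ℤ) (w : ℤ)
    (x : AddMonoidAlgebra ℤ (Fin n → ℤ)) : Prop :=
  ∀ β ∈ x.coeff.support, w ≤ lam β


section Aux

variable {n : ℕ} {lam : (Fin n → ℤ) →+ ℤ}

/-- Leading-term predicate: `γ` is the unique monomial of `f` of minimal weight `v`,
with coefficient `±1`. -/
def Lead (lam : (Fin n → ℤ) →+ ℤ) (f : AddMonoidAlgebra ℤ (Fin n → ℤ))
    (v : ℤ) (γ : Fin n → ℤ) : Prop :=
  lam γ = v ∧ (f.coeff γ = 1 ∨ f.coeff γ = -1) ∧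
    ∀ β ∈ f.coeff.support, v ≤ lam β ∧ (lam β = v → β = γ)

lemma inFil_mono {w w' : ℤ} {x} (h : w ≤ w') (hx : inFil n lam w' x) :
    inFil n lam w x := fun β hβ => h.trans (hx β hβ)

lemma inFil_add {w : ℤ} {x y} (hx : inFil n lam w x) (hy : inFil n lam w y) :
    inFil n lam w (x + y) := by
  intro β hβ
  have := Finsupp.support_add (g₁ := x.coeff) (g₂ := y.coeff) hβ
  rcases Finset.mem_union.mp this with h | h
  · exact hx β h
  · exact hy β h

lemma inFil_single {w : ℤ} {a : Fin n → ℤ} (h : w ≤ lam a) (c : ℤ) :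
    inFil n lam w (AddMonoidAlgebra.single a c) := by
  intro β hβ
  rw [AddMonoidAlgebra.coeff_single] at hβ
  have := Finsupp.support_single_subset hβ
  simp only [Finset.mem_singleton] at this
  subst this; exact h

lemma inFil_mul {v w : ℤ} {f g} (hf : inFil n lam v f) (hg : inFil n lam w g) :
    inFil n lam (v + w) (f * g) := by
  classical
  intro β hβ
  have := AddMonoidAlgebra.support_coeff_mul_subset f g hβ
  obtain ⟨a, ha, b, hb, rfl⟩ := Finset.mem_add.mp this
  rw [map_add]
  exact add_le_add (hf a ha) (hg b hb)

lemma Lead.fil {f v γ} (h : Lead lam f v γ) : inFil n lam v f :=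
  fun β hβ => (h.2.2 β hβ).1

lemma Lead.residual {f v γ} (h : Lead lam f v γ) :
    inFil n lam (v + 1) (f - AddMonoidAlgebra.single γ (f.coeff γ)) := by
  classical
  intro β hβ
  rw [Finsupp.mem_support_iff, AddMonoidAlgebra.coeff_sub, Finsupp.sub_apply, AddMonoidAlgebra.coeff_single, Finsupp.single_apply] at hβ
  by_cases hβγ : β = γ
  · subst hβγ; simp at hβ
  · rw [if_neg (fun h => hβγ h.symm), sub_zero] at hβ
    obtain ⟨h1, h2⟩ := h.2.2 β (Finsupp.mem_support_iff.mpr hβ)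
    rcases h1.lt_or_eq with h | h
    · omega
    · exact absurd (h2 h.symm) hβγ

lemma Lead.mul {f g v₁ v₂ γ₁ γ₂} (hf : Lead lam f v₁ γ₁) (hg : Lead lam g v₂ γ₂) :
    Lead lam (f * g) (v₁ + v₂) (γ₁ + γ₂) := by
  classical
  set E : AddMonoidAlgebra ℤ (Fin n → ℤ) :=
    AddMonoidAlgebra.single γ₁ (f.coeff γ₁) * (g - AddMonoidAlgebra.single γ₂ (g.coeff γ₂)) +
      (f - AddMonoidAlgebra.single γ₁ (f.coeff γ₁)) * g with hE
  have key : f * g = AddMonoidAlgebra.single (γ₁ + γ₂) ((f.coeff γ₁) * (g.coeff γ₂)) + E := by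
    rw [hE, ← AddMonoidAlgebra.single_mul_single]
    ring
  have hEfil : inFil n lam (v₁ + v₂ + 1) E := by
    refine inFil_add (inFil_mono ?_ (inFil_mul (inFil_single hf.1.ge (f.coeff γ₁)) hg.residual))
      (inFil_mono ?_ (inFil_mul hf.residual hg.fil)) <;> omega
  have hlamγ : lam (γ₁ + γ₂) = v₁ + v₂ := by rw [map_add, hf.1, hg.1]
  have hEγ : E.coeff (γ₁ + γ₂) = 0 := by
    by_contra h
    have := hEfil _ (Finsupp.mem_support_iff.mpr h)
    omega
  have hcoef : (f * g).coeff (γ₁ + γ₂) = (f.coeff γ₁) * (g.coeff γ₂) := by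
    rw [key, AddMonoidAlgebra.coeff_add, Finsupp.add_apply, hEγ, add_zero, AddMonoidAlgebra.coeff_single, Finsupp.single_eq_same]
  refine ⟨hlamγ, ?_, ?_⟩
  · rw [hcoef]
    rcases hf.2.1 with h1 | h1 <;> rcases hg.2.1 with h2 | h2 <;> rw [h1, h2] <;> norm_num
  · intro β hβ
    rw [Finsupp.mem_support_iff, key, AddMonoidAlgebra.coeff_add, Finsupp.add_apply] at hβ
    by_cases hb : β = γ₁ + γ₂
    · subst hb; exact ⟨le_of_eq hlamγ.symm, fun _ => rfl⟩
    · rw [AddMonoidAlgebra.coeff_single, Finsupp.single_apply, if_neg (fun h => hb h.symm), zero_add] at hβ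
      have := hEfil _ (Finsupp.mem_support_iff.mpr hβ)
      exact ⟨by omega, fun h => by omega⟩

lemma lead_one : Lead lam (1 : AddMonoidAlgebra ℤ (Fin n → ℤ)) 0 0 := by
  classical
  refine ⟨map_zero _, Or.inl ?_, ?_⟩
  · rw [AddMonoidAlgebra.one_def, AddMonoidAlgebra.coeff_single, Finsupp.single_eq_same]
  · intro β hβ
    rw [AddMonoidAlgebra.one_def, Finsupp.mem_support_iff, AddMonoidAlgebra.coeff_single, Finsupp.single_apply] at hβ
    by_cases h : (0 : Fin n → ℤ) = β
    · subst h; simp [map_zero]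
    · rw [if_neg h] at hβ; simp at hβ

lemma lead_factor {β : Fin n → ℤ} (hβ : lam β ≠ 0) :
    ∃ v γ, Lead lam (1 - AddMonoidAlgebra.single β 1) v γ := by
  classical
  have hβ0 : β ≠ 0 := fun h => hβ (h ▸ map_zero lam)
  have hc0 : (1 - AddMonoidAlgebra.single β 1 : AddMonoidAlgebra ℤ (Fin n → ℤ)).coeff 0 = 1 := by
    rw [AddMonoidAlgebra.coeff_sub, Finsupp.sub_apply, AddMonoidAlgebra.one_def, AddMonoidAlgebra.coeff_single, Finsupp.single_eq_same,
      AddMonoidAlgebra.coeff_single, Finsupp.single_apply, if_neg hβ0]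
    ring
  have hcβ : (1 - AddMonoidAlgebra.single β 1 : AddMonoidAlgebra ℤ (Fin n → ℤ)).coeff β = -1 := by
    rw [AddMonoidAlgebra.coeff_sub, Finsupp.sub_apply, AddMonoidAlgebra.one_def, AddMonoidAlgebra.coeff_single,
      AddMonoidAlgebra.coeff_single, Finsupp.single_eq_same, Finsupp.single_apply, if_neg (fun h => hβ0 h.symm)]
    ring
  have hsupp : ∀ δ ∈ (1 - AddMonoidAlgebra.single β 1 :
      AddMonoidAlgebra ℤ (Fin n → ℤ)).coeff.support, δ = 0 ∨ δ = β := by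
    intro δ hδ
    have := Finsupp.support_sub (f := (1 : AddMonoidAlgebra ℤ (Fin n → ℤ)).coeff)
      (g := (AddMonoidAlgebra.single β 1).coeff) hδ
    rw [AddMonoidAlgebra.one_def, AddMonoidAlgebra.coeff_single, AddMonoidAlgebra.coeff_single] at this
    rcases Finset.mem_union.mp this with h | h
    · exact Or.inl (Finset.mem_singleton.mp (Finsupp.support_single_subset h))
    · exact Or.inr (Finset.mem_singleton.mp (Finsupp.support_single_subset h))
  rcases hβ.lt_or_gt with hneg | hpos
  · refine ⟨lam β, β, rfl, Or.inr hcβ, ?_⟩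
    intro δ hδ
    rcases hsupp δ hδ with h | h <;> subst h
    · rw [map_zero]
      constructor
      · omega
      · intro h; omega
    · exact ⟨le_rfl, fun _ => rfl⟩
  · refine ⟨0, 0, map_zero _, Or.inl hc0, ?_⟩
    intro δ hδ
    rcases hsupp δ hδ with h | h <;> subst h
    · exact ⟨le_of_eq (map_zero _).symm, fun _ => rfl⟩
    · exact ⟨le_of_lt hpos, fun h => absurd h hβ⟩

lemma lead_prod (S : Finset (Fin n → ℤ)) (hS : ∀ β ∈ S, lam β ≠ 0) :
    ∃ v γ, Lead lam (∏ β ∈ S, (1 - AddMonoidAlgebra.single β 1)) v γ := by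
  classical
  induction S using Finset.induction with
  | empty => exact ⟨0, 0, by rw [Finset.prod_empty]; exact lead_one⟩
  | @insert a s ha ih =>
    obtain ⟨v₁, γ₁, h₁⟩ := lead_factor (hS a (Finset.mem_insert_self a s))
    obtain ⟨v₂, γ₂, h₂⟩ := ih (fun β hβ => hS β (Finset.mem_insert_of_mem hβ))
    exact ⟨v₁ + v₂, γ₁ + γ₂, by rw [Finset.prod_insert ha]; exact h₁.mul h₂⟩

end Aux

/-- For `f = ∏_{β∈S}(1 - q^β)` with `λ(β) ≠ 0` for all `β ∈ S`, and `v` the minimal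
`λ`-weight of a monomial of `f`: the leading term of `f` in `gr_v R` is `± q^γ` for a
single character `γ` with `λ(γ) = v`; and multiplication by `f` induces an isomorphism
`gr_w R → gr_{w+v} R` for every `w` (expressed elementwise: `f · R_{≥w} ⊆ R_{≥w+v}`,
surjectivity modulo `R_{≥w+v+1}`, and injectivity modulo `R_{≥w+1}`). -/
theorem stmt_1 (n : ℕ) (S : Finset (Fin n → ℤ))
    (lam : (Fin n → ℤ) →+ ℤ)
    (hlam : ∀ β ∈ S, lam β ≠ 0)
    (f : AddMonoidAlgebra ℤ (Fin n → ℤ))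
    (hf : f = ∏ β ∈ S, (1 - AddMonoidAlgebra.single β 1))
    (v : ℤ)
    (hv₁ : ∀ β ∈ f.coeff.support, v ≤ lam β)
    (hv₂ : ∃ β ∈ f.coeff.support, lam β = v) :
    (∃ γ : Fin n → ℤ, lam γ = v ∧ (f.coeff γ = 1 ∨ f.coeff γ = -1) ∧
      ∀ β ∈ f.coeff.support, lam β = v → β = γ) ∧
    (∀ w : ℤ,
      (∀ x, inFil n lam w x → inFil n lam (w + v) (f * x)) ∧
      (∀ y, inFil n lam (w + v) y →
        ∃ x, inFil n lam w x ∧ inFil n lam (w + v + 1) (f * x - y)) ∧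
      (∀ x, inFil n lam w x → inFil n lam (w + v + 1) (f * x) →
        inFil n lam (w + 1) x)) := by
  classical
  obtain ⟨v', γ, hL⟩ : ∃ v' γ, Lead lam f v' γ := hf ▸ lead_prod S hlam
  -- the coefficient of `f` at `γ` is nonzero
  have hγne : f.coeff γ ≠ 0 := by rcases hL.2.1 with h | h <;> rw [h] <;> simp
  have hγmem : γ ∈ f.coeff.support := Finsupp.mem_support_iff.mpr hγne
  have hvv' : v' = v := by
    obtain ⟨β, hβ, hβv⟩ := hv₂
    have h1 : v' ≤ v := hβv ▸ (hL.2.2 β hβ).1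
    have h2 : v ≤ v' := hL.1 ▸ hv₁ γ hγmem
    omega
  rw [hvv'] at hL
  have hε : f.coeff γ * f.coeff γ = 1 := by rcases hL.2.1 with h | h <;> rw [h] <;> ring
  refine ⟨⟨γ, hL.1, hL.2.1, fun β hβ hβv => (hL.2.2 β hβ).2 hβv⟩, fun w => ⟨?_, ?_, ?_⟩⟩
  · -- filtration preserved
    intro x hx
    exact inFil_mono (by omega) (inFil_mul hL.fil hx)
  · -- surjectivity mod higher terms
    intro y hy
    refine ⟨AddMonoidAlgebra.single (-γ) (f.coeff γ) * y, ?_, ?_⟩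
    · have : lam (-γ) = -v := by rw [map_neg, hL.1]
      exact inFil_mono (by omega) (inFil_mul (inFil_single this.ge (f.coeff γ)) hy)
    · have hdecomp : f * (AddMonoidAlgebra.single (-γ) (f.coeff γ) * y) - y =
          ((f - AddMonoidAlgebra.single γ (f.coeff γ)) * AddMonoidAlgebra.single (-γ) (f.coeff γ)) * y := by
        have h1 : AddMonoidAlgebra.single γ (f.coeff γ) * AddMonoidAlgebra.single (-γ) (f.coeff γ)
            = (1 : AddMonoidAlgebra ℤ (Fin n → ℤ)) := by
          rw [AddMonoidAlgebra.single_mul_single, hε, add_neg_cancel,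
            AddMonoidAlgebra.one_def]
        calc f * (AddMonoidAlgebra.single (-γ) (f.coeff γ) * y) - y
            = ((f - AddMonoidAlgebra.single γ (f.coeff γ)) * AddMonoidAlgebra.single (-γ) (f.coeff γ)) * y
              + (AddMonoidAlgebra.single γ (f.coeff γ) * AddMonoidAlgebra.single (-γ) (f.coeff γ)) * y
              - y := by ring
          _ = _ := by rw [h1, one_mul]; ring
      rw [hdecomp]
      have h2 : lam (-γ) = -v := by rw [map_neg, hL.1]
      have h3 : inFil n lam ((v + 1) + -v) ((f - AddMonoidAlgebra.single γ (f.coeff γ)) *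
          AddMonoidAlgebra.single (-γ) (f.coeff γ)) :=
        inFil_mul hL.residual (inFil_single h2.ge (f.coeff γ))
      exact inFil_mono (by omega) (inFil_mul h3 hy)
  · -- injectivity mod higher terms
    intro x hx hfx β hβ
    by_contra hcon
    have hw : lam β = w := by have := hx β hβ; omega
    have hxβ : x.coeff β ≠ 0 := Finsupp.mem_support_iff.mp hβ
    have hsplit : f * x = AddMonoidAlgebra.single γ (f.coeff γ) * x +
        (f - AddMonoidAlgebra.single γ (f.coeff γ)) * x := by ring
    have hresx : inFil n lam ((v + 1) + w) ((f - AddMonoidAlgebra.single γ (f.coeff γ)) * x) :=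
      inFil_mul hL.residual hx
    have hlamγβ : lam (γ + β) = v + w := by rw [map_add, hL.1, hw]
    have hres0 : ((f - AddMonoidAlgebra.single γ (f.coeff γ)) * x).coeff (γ + β) = 0 := by
      by_contra h
      have := hresx _ (Finsupp.mem_support_iff.mpr h)
      omega
    have hcoef : (f * x).coeff (γ + β) = f.coeff γ * x.coeff β := by
      rw [hsplit, AddMonoidAlgebra.coeff_add, Finsupp.add_apply, hres0, add_zero,
        AddMonoidAlgebra.coeff_single_mul_apply, neg_add_cancel_left]
    have hne : (f * x).coeff (γ + β) ≠ 0 := by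
      rw [hcoef]
      exact mul_ne_zero hγne hxβ
    have := hfx _ (Finsupp.mem_support_iff.mpr hne)
    omega
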